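/- Let A be a unital C*-algebra and let x, y ∈ A be selfadjoint elements that do not commute (x·y ≠ y·x). Then the set of inner automorphisms { a ↦ exp(i·ε·(x + s·y)) · a · exp(i·ε·(x + s·y))⁻¹ : s, ε ∈ ℝ } is infinite. -/

import Mathlib

open NormedSpace

/-- If `x, y` are selfadjoint elements of a unital C*-algebra `A` that do not commute, then the
inner automorphisms `a ↦ exp(iε•(x + s•y)) * a * exp(iε•(x + s•y))⁻¹`, for `s, ε ∈ ℝ`,
form an infinite set of maps. -/
theorem stmt_4 {A : Type*} [NormedRing A] [StarRing A] [CStarRing A]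
    [NormedAlgebra ℂ A] [CompleteSpace A] [StarModule ℂ A]
    (x y : A) (hx : IsSelfAdjoint x) (hy : IsSelfAdjoint y) (hxy : x * y ≠ y * x) :
    Set.Infinite {f : A → A | ∃ s ε : ℝ,
      f = fun a => exp ((Complex.I * (ε : ℂ)) • (x + (s : ℂ) • y)) * a *
        Ring.inverse (exp ((Complex.I * (ε : ℂ)) • (x + (s : ℂ) • y)))} := by
  let +nondep : NormedAlgebra ℚ A := .restrictScalars ℚ ℂ A
  by_contra hfin
  rw [Set.not_infinite] at hfin
  -- the one-parameter unitary group
  set u : ℝ → A := fun ε => exp ((Complex.I * (ε : ℂ)) • x) with hu_def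
  have hu_add : ∀ a b : ℝ, u (a + b) = u a * u b := by
    intro a b
    have hc : Commute ((Complex.I * (a : ℂ)) • x) ((Complex.I * (b : ℂ)) • x) :=
      ((Commute.refl x).smul_left _).smul_right _
    have : (Complex.I * ((a + b : ℝ) : ℂ)) • x
        = (Complex.I * (a : ℂ)) • x + (Complex.I * (b : ℂ)) • x := by
      rw [← add_smul]; congr 1; push_cast; ring
    simp only [hu_def, this, exp_add_of_commute hc]
  have hu0 : u 0 = 1 := by simp [hu_def, exp_zero]
  have huinv : ∀ a : ℝ, Ring.inverse (u a) = u (-a) := by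
    intro a
    simp only [hu_def, Ring.inverse_exp]
    congr 1
    rw [← neg_smul]; congr 1; push_cast; ring
  have hu_mul_neg : ∀ a : ℝ, u a * u (-a) = 1 := by
    intro a; rw [← hu_add, add_neg_cancel, hu0]
  have hu_neg_mul : ∀ a : ℝ, u (-a) * u a = 1 := by
    intro a; rw [← hu_add, neg_add_cancel, hu0]
  -- the family of inner automorphisms along `x`
  set φ : ℝ → A → A := fun ε a => u ε * a * u (-ε) with hφ_def
  have hφmem : ∀ ε : ℝ, φ ε ∈ {f : A → A | ∃ s ε : ℝ,
      f = fun a => exp ((Complex.I * (ε : ℂ)) • (x + (s : ℂ) • y)) * a *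
        Ring.inverse (exp ((Complex.I * (ε : ℂ)) • (x + (s : ℂ) • y)))} := by
    intro ε
    refine ⟨0, ε, ?_⟩
    funext a
    simp only [hφ_def, Complex.ofReal_zero, zero_smul, add_zero, huinv ε, hu_def]
    exact congrArg (fun t => exp ((Complex.I * (ε : ℂ)) • x) * a * t) (huinv ε).symm
  have hφ0 : ∀ a : A, φ 0 a = a := by
    intro a; simp [hφ_def, hu0]
  have hφ_comp : ∀ a b : ℝ, φ (a + b) = φ a ∘ φ b := by
    intro a b
    funext z
    show u (a + b) * z * u (-(a + b)) = u a * (u b * z * u (-b)) * u (-a)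
    rw [hu_add, show -(a + b) = -b + -a by ring, hu_add]
    simp [mul_assoc]
  -- cancellation : equal values give identity
  have hid : ∀ a b : ℝ, φ a = φ b → φ (a - b) = id := by
    intro a b h
    funext z
    have hz : φ b (φ (-b) z) = z := by
      have := congrFun (hφ_comp b (-b)) z
      simp only [add_neg_cancel, Function.comp_apply] at this
      rw [← this, hφ0]
    calc φ (a - b) z = φ (a - b) (φ b (φ (-b) z)) := by rw [hz]
      _ = φ (a - b + b) (φ (-b) z) := by rw [hφ_comp]; rfl
      _ = φ a (φ (-b) z) := by rw [sub_add_cancel]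
      _ = φ b (φ (-b) z) := by rw [h]
      _ = z := hz
  -- iterating the identity
  have hpow : ∀ δ : ℝ, φ δ = id → ∀ q : ℕ, φ (q * δ) = id := by
    intro δ hδ q
    induction q with
    | zero => simpa using (funext hφ0 : φ 0 = id)
    | succ n ih =>
        have : ((n + 1 : ℕ) : ℝ) * δ = (n : ℕ) * δ + δ := by push_cast; ring
        rw [this, hφ_comp, ih, hδ]
        rfl
  -- every φ ε is the identity
  have hφid : ∀ ε : ℝ, φ ε = id := by
    intro ε
    set N := hfin.toFinset.card with hN
    set δ0 : ℝ := ε / (Nat.factorial N : ℝ) with hδ0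
    have hG : ∀ j : Fin (N + 1), φ (((j : ℕ) + 1 : ℕ) * δ0) ∈ hfin.toFinset := by
      intro j; rw [Set.Finite.mem_toFinset]; exact hφmem _
    have hcard : Fintype.card hfin.toFinset < Fintype.card (Fin (N + 1)) := by
      simp [hN]
    obtain ⟨i, j, hij, hGij⟩ := Fintype.exists_ne_map_eq_of_card_lt
      (fun j : Fin (N + 1) => (⟨φ (((j : ℕ) + 1 : ℕ) * δ0), hG j⟩ : hfin.toFinset)) hcard
    have heq : φ (((i : ℕ) + 1 : ℕ) * δ0) = φ (((j : ℕ) + 1 : ℕ) * δ0) := by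
      simpa using congrArg Subtype.val hGij
    -- wlog i < j
    rcases lt_or_gt_of_ne (fun h : (i : ℕ) = (j : ℕ) => hij (Fin.ext h)) with hlt | hlt
    case _ =>
      -- i < j : use k = j - i
      have hk : φ ((((j : ℕ) - (i : ℕ) : ℕ) : ℝ) * δ0) = id := by
        have := hid (((j : ℕ) + 1 : ℕ) * δ0) (((i : ℕ) + 1 : ℕ) * δ0) heq.symm
        have harith : (((j : ℕ) + 1 : ℕ) : ℝ) * δ0 - (((i : ℕ) + 1 : ℕ) : ℝ) * δ0
            = (((j : ℕ) - (i : ℕ) : ℕ) : ℝ) * δ0 := by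
          rw [Nat.cast_sub hlt.le]; push_cast; ring
        rwa [harith] at this
      set k : ℕ := (j : ℕ) - (i : ℕ) with hkdef
      have hk1 : 1 ≤ k := by omega
      have hkN : k ≤ N := by
        have := j.2; omega
      obtain ⟨q, hq⟩ := Nat.dvd_factorial hk1 hkN
      have hNfac : ((Nat.factorial N : ℕ) : ℝ) * δ0 = ε := by
        rw [hδ0]
        field_simp
      have : φ ((q : ℝ) * ((k : ℝ) * δ0)) = id := hpow _ hk q
      rw [← hNfac, hq]
      push_cast
      rw [show (k : ℝ) * (q : ℝ) * δ0 = (q : ℝ) * ((k : ℝ) * δ0) by ring]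
      exact this
    case _ =>
      have hlt' : (j : ℕ) < (i : ℕ) := hlt
      have hk : φ ((((i : ℕ) - (j : ℕ) : ℕ) : ℝ) * δ0) = id := by
        have := hid (((i : ℕ) + 1 : ℕ) * δ0) (((j : ℕ) + 1 : ℕ) * δ0) heq
        have harith : (((i : ℕ) + 1 : ℕ) : ℝ) * δ0 - (((j : ℕ) + 1 : ℕ) : ℝ) * δ0
            = (((i : ℕ) - (j : ℕ) : ℕ) : ℝ) * δ0 := by
          rw [Nat.cast_sub hlt'.le]; push_cast; ring
        rwa [harith] at this
      set k : ℕ := (i : ℕ) - (j : ℕ) with hkdef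
      have hk1 : 1 ≤ k := by omega
      have hkN : k ≤ N := by
        have := i.2; omega
      obtain ⟨q, hq⟩ := Nat.dvd_factorial hk1 hkN
      have hNfac : ((Nat.factorial N : ℕ) : ℝ) * δ0 = ε := by
        rw [hδ0]
        field_simp
      have : φ ((q : ℝ) * ((k : ℝ) * δ0)) = id := hpow _ hk q
      rw [← hNfac, hq]
      push_cast
      rw [show (k : ℝ) * (q : ℝ) * δ0 = (q : ℝ) * ((k : ℝ) * δ0) by ring]
      exact this
  -- hence u ε commutes with y
  have hcomm : ∀ ε : ℝ, u ε * y = y * u ε := by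
    intro ε
    have h1 : u ε * y * u (-ε) = y := congrFun (hφid ε) y
    have := congrArg (· * u ε) h1
    simpa [mul_assoc, hu_neg_mul ε] using this
  -- differentiate at 0
  have hg : HasDerivAt (fun z : ℂ => exp (z • (Complex.I • x))) (Complex.I • x) 0 := by
    simpa [exp_zero] using hasDerivAt_exp_smul_const (𝕂 := ℂ) (Complex.I • x) (0 : ℂ)
  have hofReal : HasDerivAt (fun t : ℝ => (t : ℂ)) 1 0 := by
    have h := Complex.ofRealCLM.hasDerivAt (x := (0 : ℝ)); simp at h; exact h
  have hu' : HasDerivAt u (Complex.I • x) 0 := by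
    have hg0 : HasDerivAt (fun z : ℂ => exp (z • (Complex.I • x))) (Complex.I • x)
        ((fun t : ℝ => (t : ℂ)) 0) := by simpa using hg
    have hcomp : HasDerivAt (fun t : ℝ => exp ((t : ℂ) • (Complex.I • x)))
        ((1 : ℂ) • (Complex.I • x)) 0 := by
      have := HasDerivAt.scomp (0 : ℝ) hg0 hofReal
      simp only [one_smul] at this ⊢; exact this
    have hfun : (fun t : ℝ => exp ((t : ℂ) • (Complex.I • x))) = u := by
      funext t
      simp only [hu_def, smul_smul, mul_comm]
    rw [hfun] at hcomp
    simpa using hcomp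
  have hF : (fun t : ℝ => u t * y - y * u t) = fun _ => (0 : A) := by
    funext t; rw [sub_eq_zero]; exact hcomm t
  have hF' : HasDerivAt (fun t : ℝ => u t * y - y * u t)
      ((Complex.I • x) * y - y * (Complex.I • x)) 0 :=
    (hu'.mul_const y).sub (hu'.const_mul y)
  have hF0 : HasDerivAt (fun t : ℝ => u t * y - y * u t) 0 0 := by
    rw [hF]; exact hasDerivAt_const 0 0
  have hzero : (Complex.I • x) * y - y * (Complex.I • x) = 0 := hF'.unique hF0
  have : Complex.I • (x * y) = Complex.I • (y * x) := by
    rw [smul_mul_assoc] at hzero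
    rw [mul_smul_comm] at hzero
    rw [sub_eq_zero] at hzero; exact hzero
  exact hxy (smul_right_injective A Complex.I_ne_zero this)
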